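/- Let A be a finite set with |A| = n even, let a* ∈ A, and let f : 2^A → ℝ≥0 be a set function that is monotone (f(X) ≤ f(Y) whenever X ⊆ Y) and satisfies f(A) ≤ f(X) + f(A∖X) for every X ⊆ A. Let R be a uniformly random subset of A of size n/2. Then f(A) ≤ 2·E[f(R ∪ {a*})]. -/
import Mathlib


open Finset

/-- for a monotone, partition-subadditive set function `f` on a finite set `A`
with `n` elements (`n` even) and a distinguished element `a⋆`, if `R` is a uniformly random
subset of `A` of size `n/2` then `f(A) ≤ 2 · E[f(R ∪ {a⋆})]`. -/
theorem stmt_11 {α : Type*} [Fintype α] [DecidableEq α] (n : ℕ)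
    (hcard : Fintype.card α = n) (hn : Even n)
    (astar : α) (f : Finset α → NNReal)
    (hmono : Monotone f)
    (hsub : ∀ X : Finset α, f Finset.univ ≤ f X + f Xᶜ) :
    (f Finset.univ : ℝ) ≤
      2 * ((∑ R ∈ Finset.powersetCard (n / 2) (Finset.univ : Finset α),
              (f (R ∪ {astar}) : ℝ)) /
            ((Finset.powersetCard (n / 2) (Finset.univ : Finset α)).card : ℝ)) := by
  set P := Finset.powersetCard (n / 2) (Finset.univ : Finset α) with hP
  have hmem : ∀ R : Finset α, R ∈ P ↔ R.card = n / 2 := by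
    intro R
    simp [hP, Finset.mem_powersetCard_univ]
  have hcompl : ∀ R : Finset α, R ∈ P → Rᶜ ∈ P := by
    intro R hR
    rw [hmem] at hR ⊢
    rw [Finset.card_compl, hR, hcard]
    obtain ⟨k, hk⟩ := hn
    omega
  have hPne : P.Nonempty := by
    rw [hP]
    apply Finset.powersetCard_nonempty.mpr
    rw [Finset.card_univ, hcard]
    omega
  have hPcard : (0 : ℝ) < (P.card : ℝ) := by
    exact_mod_cast Finset.card_pos.mpr hPne
  -- key: sum over complements equals sum
  have hsumeq : ∑ R ∈ P, (f (Rᶜ ∪ {astar}) : ℝ) = ∑ R ∈ P, (f (R ∪ {astar}) : ℝ) := by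
    apply Finset.sum_nbij' (fun R => Rᶜ) (fun R => Rᶜ)
    · intro R hR; exact hcompl R hR
    · intro R hR; exact hcompl R hR
    · intro R _; simp
    · intro R _; simp
    · intro R _; simp
  have key : (P.card : ℝ) * (f Finset.univ : ℝ) ≤ 2 * ∑ R ∈ P, (f (R ∪ {astar}) : ℝ) := by
    have h1 : (P.card : ℝ) * (f Finset.univ : ℝ) = ∑ _R ∈ P, (f Finset.univ : ℝ) := by
      rw [Finset.sum_const, nsmul_eq_mul]
    rw [h1]
    have h2 : ∀ R ∈ P, (f Finset.univ : ℝ) ≤ (f (R ∪ {astar}) : ℝ) + (f (Rᶜ ∪ {astar}) : ℝ) := by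
      intro R _
      have := hsub R
      have hm1 : f R ≤ f (R ∪ {astar}) := hmono (Finset.subset_union_left)
      have hm2 : f Rᶜ ≤ f (Rᶜ ∪ {astar}) := hmono (Finset.subset_union_left)
      have : f Finset.univ ≤ f (R ∪ {astar}) + f (Rᶜ ∪ {astar}) :=
        le_trans this (add_le_add hm1 hm2)
      exact_mod_cast this
    calc ∑ _R ∈ P, (f Finset.univ : ℝ)
        ≤ ∑ R ∈ P, ((f (R ∪ {astar}) : ℝ) + (f (Rᶜ ∪ {astar}) : ℝ)) :=
          Finset.sum_le_sum h2
      _ = ∑ R ∈ P, (f (R ∪ {astar}) : ℝ) + ∑ R ∈ P, (f (Rᶜ ∪ {astar}) : ℝ) :=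
          Finset.sum_add_distrib
      _ = 2 * ∑ R ∈ P, (f (R ∪ {astar}) : ℝ) := by rw [hsumeq]; ring
  rw [mul_div_assoc', le_div_iff₀ hPcard]
  linarith [key]
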